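/- Let $v_A, v_B \in (0,\infty)^n$ be probability vectors, $T_A \ge T_B > 0$, and let $f$ be as defined. Any $\gamma^* > 0$ with $f(\gamma^*)=0$ satisfies $\frac{T_B}{T_A}\cdot\frac{1}{1+\chi^2(v_B\|v_A)} \le \gamma^* \le \frac{T_B}{T_A}\left(1+\chi^2(v_A\|v_B)\right)$. -/

import Mathlib

lemma cheb1 {n : ℕ} (w b h : Fin n → ℝ) (hw : ∀ i, 0 ≤ w i)
    (key : ∀ i j, 0 ≤ (b j - b i) * (h i * b j - h j * b i)) :
    (∑ i, w i * (b i * h i)) * (∑ i, w i * b i) ≤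
      (∑ i, w i * h i) * (∑ i, w i * b i ^ 2) := by
  have H : 0 ≤ ∑ i, ∑ j, (w i * w j) * ((b j - b i) * (h i * b j - h j * b i)) := by
    refine Finset.sum_nonneg fun i _ => Finset.sum_nonneg fun j _ => ?_
    exact mul_nonneg (mul_nonneg (hw i) (hw j)) (key i j)
  have hid : ∑ i, ∑ j, (w i * w j) * ((b j - b i) * (h i * b j - h j * b i))
      = (∑ i, w i * h i) * (∑ j, w j * b j ^ 2)
        + (∑ i, w i * b i ^ 2) * (∑ j, w j * h j)
        - (∑ i, w i * (b i * h i)) * (∑ j, w j * b j)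
        - (∑ i, w i * b i) * (∑ j, w j * (b j * h j)) := by
    simp only [Finset.sum_mul_sum, ← Finset.sum_sub_distrib, ← Finset.sum_add_distrib]
    exact Finset.sum_congr rfl fun i _ => Finset.sum_congr rfl fun j _ => by ring
  rw [hid] at H
  nlinarith [H]

lemma cheb2 {n : ℕ} (w a G : Fin n → ℝ) (hw : ∀ i, 0 ≤ w i)
    (key : ∀ i j, 0 ≤ (a j - a i) * (G i - G j)) :
    (∑ i, w i * (a i * G i)) * (∑ i, w i) ≤
      (∑ i, w i * a i) * (∑ i, w i * G i) := by
  have H : 0 ≤ ∑ i, ∑ j, (w i * w j) * ((a j - a i) * (G i - G j)) := by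
    refine Finset.sum_nonneg fun i _ => Finset.sum_nonneg fun j _ => ?_
    exact mul_nonneg (mul_nonneg (hw i) (hw j)) (key i j)
  have hid : ∑ i, ∑ j, (w i * w j) * ((a j - a i) * (G i - G j))
      = (∑ i, w i * G i) * (∑ j, w j * a j)
        + (∑ i, w i * a i) * (∑ j, w j * G j)
        - (∑ i, w i * (a i * G i)) * (∑ j, w j)
        - (∑ i, w i) * (∑ j, w j * (a j * G j)) := by
    simp only [Finset.sum_mul_sum, ← Finset.sum_sub_distrib, ← Finset.sum_add_distrib]
    exact Finset.sum_congr rfl fun i _ => Finset.sum_congr rfl fun j _ => by ring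
  rw [hid] at H
  nlinarith [H]

lemma final_lower (TA TB γ S P Q : ℝ) (hTA : 0 < TA) (hTB : 0 < TB) (hS : 0 < S)
    (hQ : 0 < Q) (heq : γ * TA * S = TB * P) (hin : S ≤ P * Q) :
    TB / TA * (1 / Q) ≤ γ := by
  rw [div_mul_div_comm, mul_one, div_le_iff₀ (by positivity)]
  have h2 : TB * S ≤ TB * (P * Q) := mul_le_mul_of_nonneg_left hin hTB.le
  have h3 : TB * (P * Q) = γ * (TA * Q) * S := by
    calc TB * (P * Q) = (TB * P) * Q := by ring
    _ = (γ * TA * S) * Q := by rw [← heq]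
    _ = γ * (TA * Q) * S := by ring
  nlinarith [h2, h3, hS]

lemma final_upper (TA TB γ S P R : ℝ) (hTA : 0 < TA) (hTB : 0 < TB) (hS : 0 < S)
    (heq : γ * TA * S = TB * P) (hin : P ≤ R * S) :
    γ ≤ TB / TA * R := by
  rw [div_mul_eq_mul_div, le_div_iff₀ hTA]
  have h2 : TB * P ≤ TB * (R * S) := mul_le_mul_of_nonneg_left hin hTB.le
  rw [← heq] at h2
  nlinarith [h2, hS]

/-- The equilibrium function `f` for the General Lotto game. -/
noncomputable def lottoF {n : ℕ} (vA vB : Fin n → ℝ) (TA TB : ℝ) (γ : ℝ) : ℝ :=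
  γ * TA * ∑ i, min (γ^2 * (vB i)^2 / vA i) (vA i) -
    TB * ∑ i, (vA i / vB i) * min (γ^2 * (vB i)^2 / vA i) (vA i)

/-- Chi-squared divergence between probability vectors. -/
noncomputable def chiSq {n : ℕ} (u v : Fin n → ℝ) : ℝ := (∑ i, (u i)^2 / v i) - 1

theorem stmt_4 (n : ℕ) (vA vB : Fin n → ℝ) (TA TB : ℝ)
    (hvA : ∀ i, 0 < vA i) (hvB : ∀ i, 0 < vB i)
    (hsA : ∑ i, vA i = 1) (hsB : ∑ i, vB i = 1)
    (hT : TA ≥ TB) (hTB : 0 < TB)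
    (γs : ℝ) (hγ : 0 < γs) (hroot : lottoF vA vB TA TB γs = 0) :
    TB / TA * (1 / (1 + chiSq vB vA)) ≤ γs ∧
      γs ≤ TB / TA * (1 + chiSq vA vB) := by
  have hTA : 0 < TA := lt_of_lt_of_le hTB hT
  have hne : Nonempty (Fin n) := by
    rcases Nat.eq_zero_or_pos n with h0 | hp
    · subst h0; simp at hsA
    · exact ⟨⟨0, hp⟩⟩
  unfold lottoF at hroot
  rw [sub_eq_zero] at hroot
  set m : Fin n → ℝ := fun i => min (γs^2 * (vB i)^2 / vA i) (vA i) with hm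
  have hmpos : ∀ i, 0 < m i := fun i =>
    lt_min (div_pos (mul_pos (pow_pos hγ 2) (pow_pos (hvB i) 2)) (hvA i)) (hvA i)
  have hS : 0 < ∑ i, m i := Finset.sum_pos (fun i _ => hmpos i) Finset.univ_nonempty
  have hQ : 0 < ∑ i, (vB i)^2 / vA i :=
    Finset.sum_pos (fun i _ => div_pos (pow_pos (hvB i) 2) (hvA i)) Finset.univ_nonempty
  have heq : γs * TA * (∑ i, m i) = TB * ∑ i, (vA i / vB i) * m i := hroot
  -- key inequality 1 : ∑ m ≤ (∑ (vA/vB) m) * (∑ vB²/vA)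
  have ineq1 : (∑ i, m i) ≤ (∑ i, (vA i / vB i) * m i) * (∑ i, (vB i)^2 / vA i) := by
    have kk : ∀ i j : Fin n, vB i / vA i ≤ vB j / vA j →
        m j / vB j * (vB i / vA i) ≤ m i / vB i * (vB j / vA j) := by
      intro i j hij
      have hij' : vB i * vA j ≤ vB j * vA i := by
        rw [div_le_div_iff₀ (hvA i) (hvA j)] at hij
        linarith
      rw [div_mul_div_comm, div_mul_div_comm,
        div_le_div_iff₀ (mul_pos (hvB j) (hvA i)) (mul_pos (hvB i) (hvA j))]
      have hAj := (hvA j).ne'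
      have hAi := (hvA i).ne'
      have e1 : m j * vB i * (vB i * vA j)
          = min (γs^2 * (vB i)^2 * (vB j)^2) ((vA j * vB i)^2) := by
        rw [hm]
        simp only []
        rw [min_mul_of_nonneg _ _ (hvB i).le,
          min_mul_of_nonneg _ _ (mul_pos (hvB i) (hvA j)).le]
        congr 1
        · field_simp
        · ring
      have e2 : m i * vB j * (vB j * vA i)
          = min (γs^2 * (vB i)^2 * (vB j)^2) ((vA i * vB j)^2) := by
        rw [hm]
        simp only []
        rw [min_mul_of_nonneg _ _ (hvB j).le,
          min_mul_of_nonneg _ _ (mul_pos (hvB j) (hvA i)).le]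
        congr 1
        · field_simp
        · ring
      rw [e1, e2]
      refine min_le_min le_rfl ?_
      have h2 : (vA j * vB i) * (vA j * vB i) ≤ (vA i * vB j) * (vA i * vB j) := by
        have n1 : 0 ≤ vA j * vB i := (mul_pos (hvA j) (hvB i)).le
        have n2 : 0 ≤ vA i * vB j := (mul_pos (hvA i) (hvB j)).le
        nlinarith [hij']
      nlinarith [h2]
    have key : ∀ i j : Fin n,
        0 ≤ ((fun i => vB i / vA i) j - (fun i => vB i / vA i) i) *
          ((fun i => m i / vB i) i * (fun i => vB i / vA i) j -
            (fun i => m i / vB i) j * (fun i => vB i / vA i) i) := by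
      intro i j
      simp only []
      rcases le_total (vB i / vA i) (vB j / vA j) with hij | hij
      · exact mul_nonneg (by linarith) (by linarith [kk i j hij])
      · have := kk j i hij
        nlinarith
    have C := cheb1 vA (fun i => vB i / vA i) (fun i => m i / vB i)
      (fun i => (hvA i).le) key
    have eS : (∑ i, vA i * ((vB i / vA i) * (m i / vB i))) = ∑ i, m i := by
      refine Finset.sum_congr rfl fun i _ => ?_
      have hAi := (hvA i).ne'
      have hBi := (hvB i).ne'
      field_simp
    have eB : (∑ i, vA i * (vB i / vA i)) = 1 := by
      rw [← hsB]
      refine Finset.sum_congr rfl fun i _ => ?_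
      have hAi := (hvA i).ne'
      field_simp
    have eP : (∑ i, vA i * (m i / vB i)) = ∑ i, (vA i / vB i) * m i := by
      refine Finset.sum_congr rfl fun i _ => ?_
      ring
    have eQ : (∑ i, vA i * (vB i / vA i) ^ 2) = ∑ i, (vB i)^2 / vA i := by
      refine Finset.sum_congr rfl fun i _ => ?_
      have hAi := (hvA i).ne'
      field_simp
    rw [eS, eB, eP, eQ, mul_one] at C
    exact C
  -- key inequality 2 : ∑ (vA/vB) m ≤ (∑ vA²/vB) * (∑ m)
  have ineq2 : (∑ i, (vA i / vB i) * m i) ≤ (∑ i, (vA i)^2 / vB i) * (∑ i, m i) := by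
    have mono : ∀ k l : Fin n, vA k / vB k ≤ vA l / vB l → m l / vA l ≤ m k / vA k := by
      intro k l hkl
      have hkl' : vA k * vB l ≤ vA l * vB k := by
        rw [div_le_div_iff₀ (hvB k) (hvB l)] at hkl
        linarith
      have ek : ∀ p : Fin n, m p / vA p = min (γs^2 * (vB p)^2 / (vA p)^2) 1 := by
        intro p
        have hAp := (hvA p).ne'
        rw [hm]
        simp only []
        rw [← min_div_div_right (hvA p).le]
        congr 1
        · rw [div_div, ← pow_two]
        · exact div_self hAp
      rw [ek k, ek l]
      refine min_le_min ?_ le_rfl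
      rw [div_le_div_iff₀ (pow_pos (hvA l) 2) (pow_pos (hvA k) 2)]
      have h2 : (vA k * vB l) * (vA k * vB l) ≤ (vA l * vB k) * (vA l * vB k) := by
        have n1 : 0 ≤ vA k * vB l := (mul_pos (hvA k) (hvB l)).le
        nlinarith [hkl']
      nlinarith [mul_le_mul_of_nonneg_left h2 (sq_nonneg γs)]
    have key : ∀ i j : Fin n,
        0 ≤ ((fun i => vA i / vB i) j - (fun i => vA i / vB i) i) *
          ((fun i => m i / vA i) i - (fun i => m i / vA i) j) := by
      intro i j
      simp only []
      rcases le_total (vA i / vB i) (vA j / vB j) with hij | hij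
      · exact mul_nonneg (by linarith) (by linarith [mono i j hij])
      · have := mono j i hij
        nlinarith
    have C := cheb2 vA (fun i => vA i / vB i) (fun i => m i / vA i)
      (fun i => (hvA i).le) key
    have eP : (∑ i, vA i * ((vA i / vB i) * (m i / vA i))) = ∑ i, (vA i / vB i) * m i := by
      refine Finset.sum_congr rfl fun i _ => ?_
      have hAi := (hvA i).ne'
      have hBi := (hvB i).ne'
      field_simp
    have eR : (∑ i, vA i * (vA i / vB i)) = ∑ i, (vA i)^2 / vB i := by
      refine Finset.sum_congr rfl fun i _ => ?_
      ring
    have eS : (∑ i, vA i * (m i / vA i)) = ∑ i, m i := by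
      refine Finset.sum_congr rfl fun i _ => ?_
      have hAi := (hvA i).ne'
      field_simp
    rw [eP, eR, eS, hsA, mul_one] at C
    exact C
  constructor
  · have hQ1 : 1 + chiSq vB vA = ∑ i, (vB i)^2 / vA i := by unfold chiSq; ring
    rw [hQ1]
    exact final_lower TA TB γs (∑ i, m i) (∑ i, (vA i / vB i) * m i)
      (∑ i, (vB i)^2 / vA i) hTA hTB hS hQ heq ineq1
  · have hR1 : 1 + chiSq vA vB = ∑ i, (vA i)^2 / vB i := by unfold chiSq; ring
    rw [hR1]
    exact final_upper TA TB γs (∑ i, m i) (∑ i, (vA i / vB i) * m i)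
      (∑ i, (vA i)^2 / vB i) hTA hTB hS heq ineq2
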